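/- Let ε ≥ 0 and let Γ_1,…,Γ_k ⊂ ℝ^N be C¹ submanifolds of ℝ^N such that for each ν, any two points p, q ∈ Γ_ν can be joined, for every ε' > ε, by a C¹ path in Γ_ν of length at most (1+ε')·|p−q|. Let f be a continuous ℝ^M-valued map on ⋃_ν Γ̄_ν (the union of the Euclidean closures) whose restriction to each Γ_ν is C¹ with ‖D f‖ ≤ L on Γ_ν. Let λ : [0,1] → ⋃_ν Γ̄_ν be a continuous rectifiable path for which there exists a subdivision 0 = t₀ < t₁ < ⋯ < t_k = 1 such that each λ([t_i, t_{i+1}]) is contained in Γ̄_{ν_i} for some index ν_i. Then the length of f∘λ is at most (1+ε)·L times the length of λ. -/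

import Mathlib

/- STATEMENT 9: Let `Γ_1,…,Γ_k ⊂ ℝ^N` be `K_ε`-regular C¹ submanifolds, and `f` a
continuous map on `⋃ Γ̄_ν` which is C¹ on each `Γ_ν` with `‖Df‖ ≤ L` there. If a
continuous rectifiable path `λ : [0,1] → ⋃ Γ̄_ν` admits a subdivision
`0 = t₀ < ⋯ < t_m = 1` with each `λ([t_i,t_{i+1}])` contained in some `Γ̄_{ν_i}`, then
the length of `f∘λ` is at most `(1+ε)·L` times the length of `λ`. -/

open Set Filter

noncomputable section

/-- `Γ` is a C¹ (embedded) submanifold of `ℝ^N`: near each of its points it can be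
flattened onto a linear subspace by a C¹ diffeomorphism between open sets of `ℝ^N`. -/
def IsC1Submanifold {N : ℕ} (Γ : Set (EuclideanSpace ℝ (Fin N))) : Prop :=
  ∀ p ∈ Γ, ∃ (U V : Set (EuclideanSpace ℝ (Fin N)))
      (φ ψ : EuclideanSpace ℝ (Fin N) → EuclideanSpace ℝ (Fin N))
      (T : Submodule ℝ (EuclideanSpace ℝ (Fin N))),
    IsOpen U ∧ p ∈ U ∧ IsOpen V ∧
    ContDiffOn ℝ 1 φ U ∧ ContDiffOn ℝ 1 ψ V ∧
    φ '' U = V ∧ (∀ x ∈ U, ψ (φ x) = x) ∧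
    φ '' (Γ ∩ U) = (T : Set _) ∩ V

theorem length_image_le_of_piecewise_C1_bound {N M k : ℕ}
    (ε L : ℝ) (hε : 0 ≤ ε)
    (Γ : Fin k → Set (EuclideanSpace ℝ (Fin N)))
    (hΓ : ∀ ν, IsC1Submanifold (Γ ν))
    -- each `Γ_ν` is `K_ε`-regular: any two of its points can be joined, for every
    -- `ε' > ε`, by a C¹ path in `Γ_ν` of length at most `(1+ε')·|p-q|`:
    (hgeo : ∀ ν, ∀ p ∈ Γ ν, ∀ q ∈ Γ ν, ∀ ε' > ε,
      ∃ lam : ℝ → EuclideanSpace ℝ (Fin N),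
        ContDiff ℝ 1 lam ∧ (∀ t ∈ Icc (0 : ℝ) 1, lam t ∈ Γ ν) ∧
        lam 0 = p ∧ lam 1 = q ∧
        (∫ t in (0 : ℝ)..1, ‖deriv lam t‖) ≤ (1 + ε') * ‖p - q‖)
    (f : EuclideanSpace ℝ (Fin N) → EuclideanSpace ℝ (Fin M))
    -- `f` is continuous on the union of the closures:
    (hfcont : ContinuousOn f (⋃ ν, closure (Γ ν)))
    -- `f` is C¹ on each `Γ_ν` with `‖Df‖ ≤ L` there:
    (Df : Fin k → EuclideanSpace ℝ (Fin N) →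
      EuclideanSpace ℝ (Fin N) →L[ℝ] EuclideanSpace ℝ (Fin M))
    (hf : ∀ ν, ∀ p ∈ Γ ν, HasFDerivWithinAt f (Df ν p) (Γ ν) p)
    (hfC1 : ∀ ν, ContinuousOn (Df ν) (Γ ν))
    (hDf : ∀ ν, ∀ p ∈ Γ ν, ∀ v ∈ tangentConeAt ℝ (Γ ν) p, ‖Df ν p v‖ ≤ L * ‖v‖)
    -- `λ` is a continuous rectifiable path in `⋃ Γ̄_ν` ...
    (lam : ℝ → EuclideanSpace ℝ (Fin N))
    (hlamc : ContinuousOn lam (Icc (0 : ℝ) 1))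
    (hlam : MapsTo lam (Icc (0 : ℝ) 1) (⋃ ν, closure (Γ ν)))
    (hrect : eVariationOn lam (Icc (0 : ℝ) 1) < ⊤)
    -- ... admitting a subdivision `0 = t₀ < t₁ < ⋯ < t_m = 1` with each piece contained
    -- in the closure of some `Γ_ν`:
    (m : ℕ) (t : Fin (m + 1) → ℝ) (ht : StrictMono t)
    (ht0 : t 0 = 0) (ht1 : t (Fin.last m) = 1)
    (hpieces : ∀ i : Fin m, ∃ ν,
      lam '' Icc (t i.castSucc) (t i.succ) ⊆ closure (Γ ν)) :
    eVariationOn (f ∘ lam) (Icc (0 : ℝ) 1) ≤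
      ENNReal.ofReal ((1 + ε) * L) * eVariationOn lam (Icc (0 : ℝ) 1) := by
  classical
  set L' : ℝ := max L 0 with hL'def
  have hL' : 0 ≤ L' := le_max_right _ _
  have hDf' : ∀ ν, ∀ p ∈ Γ ν, ∀ v ∈ tangentConeAt ℝ (Γ ν) p, ‖Df ν p v‖ ≤ L' * ‖v‖ := by
    intro ν p hp v hv
    exact (hDf ν p hp v hv).trans
      (mul_le_mul_of_nonneg_right (le_max_left _ _) (norm_nonneg _))
  -- Step 1: `f` satisfies the Lipschitz estimate on each `Γ ν`.
  have key : ∀ ν, ∀ p ∈ Γ ν, ∀ q ∈ Γ ν, ‖f q - f p‖ ≤ (1 + ε) * L' * ‖p - q‖ := by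
    intro ν p hp q hq
    have h' : ∀ ε' > ε, ‖f q - f p‖ ≤ (1 + ε') * L' * ‖p - q‖ := by
      intro ε' hε'
      obtain ⟨γ, hγC1, hγmem, hγ0, hγ1, hγlen⟩ := hgeo ν p hp q hq ε' hε'
      have hmap : MapsTo γ (Icc (0 : ℝ) 1) (Γ ν) := fun s hs => hγmem s hs
      have hγd : ∀ s : ℝ, HasDerivAt γ (deriv γ s) s := fun s =>
        ((hγC1.differentiable one_ne_zero) s).hasDerivAt
      have hderivCont : Continuous (deriv γ) := hγC1.continuous_deriv le_rfl
      -- continuity of `f ∘ γ` on `[0,1]`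
      have hgcont : ContinuousOn (f ∘ γ) (Icc (0 : ℝ) 1) := by
        intro s hs
        exact ((hf ν (γ s) (hγmem s hs)).continuousWithinAt).comp
          (hγC1.continuous.continuousWithinAt) hmap
      -- derivative of `f ∘ γ` within `[0,1]`
      have hgderiv : ∀ s ∈ Icc (0 : ℝ) 1,
          HasDerivWithinAt (f ∘ γ) (Df ν (γ s) (deriv γ s)) (Icc (0 : ℝ) 1) s := by
        intro s hs
        exact (hf ν (γ s) (hγmem s hs)).comp_hasDerivWithinAt s
          ((hγd s).hasDerivWithinAt) hmap
      -- the pointwise norm bound via the tangent cone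
      have hbound : ∀ s ∈ Icc (0 : ℝ) 1,
          ‖Df ν (γ s) (deriv γ s)‖ ≤ L' * ‖deriv γ s‖ := by
        intro s hs
        obtain ⟨y, hy, hne⟩ : ∃ y ∈ Icc (0 : ℝ) 1, y ≠ s := by
          by_cases h1 : s = 1
          · exact ⟨0, ⟨le_rfl, zero_le_one⟩, by rw [h1]; norm_num⟩
          · exact ⟨1, ⟨zero_le_one, le_rfl⟩, fun h => h1 h.symm⟩
        have hseg : segment ℝ s y ⊆ Icc (0 : ℝ) 1 :=
          (convex_Icc (0 : ℝ) 1).segment_subset hs hy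
        have hc : (y - s) ∈ tangentConeAt ℝ (Icc (0 : ℝ) 1) s :=
          mem_tangentConeAt_of_segment_subset hseg
        have hfd : HasFDerivWithinAt γ
            ((1 : ℝ →L[ℝ] ℝ).smulRight (deriv γ s)) (Icc (0 : ℝ) 1) s :=
          (hγd s).hasDerivWithinAt
        have himg := hfd.mapsTo_tangent_cone hc
        have himg' : (y - s) • deriv γ s ∈ tangentConeAt ℝ (γ '' Icc (0 : ℝ) 1) (γ s) := by
          simpa using himg
        have hsub : γ '' Icc (0 : ℝ) 1 ⊆ Γ ν := by
          rintro _ ⟨a, ha, rfl⟩; exact hγmem a ha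
        have hmem2 : (y - s) • deriv γ s ∈ tangentConeAt ℝ (Γ ν) (γ s) :=
          tangentConeAt_mono hsub himg'
        have := hDf' ν (γ s) (hγmem s hs) _ hmem2
        rw [map_smul, norm_smul, norm_smul] at this
        have habs : 0 < ‖y - s‖ := by
          simpa [norm_pos_iff, sub_ne_zero] using hne
        rw [← mul_assoc, mul_comm L' ‖y - s‖, mul_assoc] at this
        exact le_of_mul_le_mul_left this habs
      -- integrability
      have hD_cont : ContinuousOn (fun s => Df ν (γ s) (deriv γ s)) (Icc (0 : ℝ) 1) := by
        exact ContinuousOn.clm_apply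
          ((hfC1 ν).comp hγC1.continuous.continuousOn hmap) hderivCont.continuousOn
      have hInt1 : IntervalIntegrable (fun s => Df ν (γ s) (deriv γ s))
          MeasureTheory.volume 0 1 :=
        ContinuousOn.intervalIntegrable (by rw [uIcc_of_le zero_le_one]; exact hD_cont)
      have hInt : IntervalIntegrable (fun s => ‖Df ν (γ s) (deriv γ s)‖)
          MeasureTheory.volume 0 1 :=
        ContinuousOn.intervalIntegrable (by rw [uIcc_of_le zero_le_one]; exact hD_cont.norm)
      have hInt2 : IntervalIntegrable (fun s => L' * ‖deriv γ s‖)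
          MeasureTheory.volume 0 1 :=
        (continuous_const.mul hderivCont.norm).intervalIntegrable _ _
      -- FTC
      have hFTC : (∫ s in (0:ℝ)..1, Df ν (γ s) (deriv γ s)) = (f ∘ γ) 1 - (f ∘ γ) 0 := by
        refine intervalIntegral.integral_eq_sub_of_hasDeriv_right_of_le zero_le_one
          hgcont (fun s hs => ?_) hInt1
        exact (hgderiv s (Ioo_subset_Icc_self hs)).mono_of_mem_nhdsWithin
          (Icc_mem_nhdsGT_of_mem ⟨hs.1.le, hs.2⟩)
      calc ‖f q - f p‖ = ‖(f ∘ γ) 1 - (f ∘ γ) 0‖ := by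
            simp [Function.comp, hγ0, hγ1]
        _ = ‖∫ s in (0:ℝ)..1, Df ν (γ s) (deriv γ s)‖ := by rw [hFTC]
        _ ≤ ∫ s in (0:ℝ)..1, ‖Df ν (γ s) (deriv γ s)‖ :=
            intervalIntegral.norm_integral_le_integral_norm zero_le_one
        _ ≤ ∫ s in (0:ℝ)..1, L' * ‖deriv γ s‖ :=
            intervalIntegral.integral_mono_on zero_le_one hInt hInt2 hbound
        _ = L' * ∫ s in (0:ℝ)..1, ‖deriv γ s‖ := intervalIntegral.integral_const_mul _ _
        _ ≤ L' * ((1 + ε') * ‖p - q‖) := mul_le_mul_of_nonneg_left hγlen hL'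
        _ = (1 + ε') * L' * ‖p - q‖ := by ring
    have htend : Tendsto (fun e : ℝ => (1 + e) * L' * ‖p - q‖) (nhdsWithin ε (Ioi ε))
        (nhds ((1 + ε) * L' * ‖p - q‖)) := by
      have : ContinuousAt (fun e : ℝ => (1 + e) * L' * ‖p - q‖) ε := by fun_prop
      exact this.tendsto.mono_left nhdsWithin_le_nhds
    exact ge_of_tendsto htend
      (Filter.eventually_of_mem self_mem_nhdsWithin fun e he => h' e he)
  -- Step 2: `f` is Lipschitz on each closure of `Γ ν`.
  have keyd : ∀ ν, ∀ p ∈ Γ ν, ∀ q ∈ Γ ν, dist (f p) (f q) ≤ (1 + ε) * L' * dist p q := by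
    intro ν p hp q hq
    rw [dist_eq_norm, dist_eq_norm, norm_sub_rev]
    exact key ν p hp q hq
  have keyc1 : ∀ ν, ∀ q ∈ Γ ν, ∀ p ∈ closure (Γ ν),
      dist (f p) (f q) ≤ (1 + ε) * L' * dist p q := by
    intro ν q hq p hp
    have hfc : ContinuousOn f (closure (Γ ν)) :=
      hfcont.mono (subset_iUnion (fun ν => closure (Γ ν)) ν)
    rcases mem_closure_iff_seq_limit.1 hp with ⟨x, hxmem, hxlim⟩
    have h1 : Tendsto (fun n => f (x n)) atTop (nhds (f p)) :=
      (hfc p hp).tendsto.comp (tendsto_nhdsWithin_iff.2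
        ⟨hxlim, Eventually.of_forall fun n => subset_closure (hxmem n)⟩)
    refine le_of_tendsto_of_tendsto' (h1.dist tendsto_const_nhds)
      (tendsto_const_nhds.mul (hxlim.dist tendsto_const_nhds)) fun n => ?_
    exact keyd ν (x n) (hxmem n) q hq
  have keyc : ∀ ν, ∀ p ∈ closure (Γ ν), ∀ q ∈ closure (Γ ν),
      dist (f p) (f q) ≤ (1 + ε) * L' * dist p q := by
    intro ν p hp q hq
    have hfc : ContinuousOn f (closure (Γ ν)) :=
      hfcont.mono (subset_iUnion (fun ν => closure (Γ ν)) ν)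
    rcases mem_closure_iff_seq_limit.1 hq with ⟨x, hxmem, hxlim⟩
    have h1 : Tendsto (fun n => f (x n)) atTop (nhds (f q)) :=
      (hfc q hq).tendsto.comp (tendsto_nhdsWithin_iff.2
        ⟨hxlim, Eventually.of_forall fun n => subset_closure (hxmem n)⟩)
    refine le_of_tendsto_of_tendsto' (tendsto_const_nhds.dist h1)
      (tendsto_const_nhds.mul (tendsto_const_nhds.dist hxlim)) fun n => ?_
    exact keyc1 ν (x n) (hxmem n) p hp
  set C : NNReal := ((1 + ε) * L').toNNReal with hCdef
  have hlip : ∀ ν, LipschitzOnWith C f (closure (Γ ν)) := by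
    intro ν
    apply LipschitzOnWith.of_dist_le_mul
    intro x hx y hy
    have : (C : ℝ) = (1 + ε) * L' :=
      Real.coe_toNNReal _ (mul_nonneg (by linarith) hL')
    rw [this]
    exact keyc ν x hx y hy
  -- Step 3: per-piece variation bound.
  have hpiece : ∀ i : Fin m,
      eVariationOn (f ∘ lam) (Icc (0:ℝ) 1 ∩ Icc (t i.castSucc) (t i.succ)) ≤
        (C : ENNReal) * eVariationOn lam (Icc (0:ℝ) 1 ∩ Icc (t i.castSucc) (t i.succ)) := by
    intro i
    obtain ⟨ν, hν⟩ := hpieces i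
    exact (hlip ν).comp_eVariationOn_le fun s hs => hν (mem_image_of_mem lam hs.2)
  have hmono : ∀ j : Fin (m + 1), t j ∈ Icc (0:ℝ) 1 := fun j =>
    ⟨ht0 ▸ ht.monotone (Fin.zero_le j), ht1 ▸ ht.monotone (Fin.le_last j)⟩
  -- Step 4: induction over the subdivision.
  have main : ∀ j : Fin (m + 1),
      eVariationOn (f ∘ lam) (Icc (0:ℝ) 1 ∩ Icc 0 (t j)) ≤
        (C : ENNReal) * eVariationOn lam (Icc (0:ℝ) 1 ∩ Icc 0 (t j)) := by
    intro j
    induction j using Fin.induction with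
    | zero =>
        rw [ht0, Set.Icc_self]
        rw [eVariationOn.subsingleton (f ∘ lam)
          (Set.subsingleton_singleton.anti inter_subset_right)]
        exact zero_le
    | succ i ih =>
        have h0i : (0:ℝ) ≤ t i.castSucc := (hmono _).1
        have hii : t i.castSucc ≤ t i.succ := (ht Fin.castSucc_lt_succ).le
        rw [← eVariationOn.Icc_add_Icc (f ∘ lam) h0i hii (hmono i.castSucc),
          ← eVariationOn.Icc_add_Icc lam h0i hii (hmono i.castSucc), mul_add]
        exact add_le_add ih (hpiece i)
  have hfinal := main (Fin.last m)
  rw [ht1] at hfinal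
  simp only [Icc_inter_Icc, sup_idem, inf_idem] at hfinal
  have hCoe : ENNReal.ofReal ((1 + ε) * L) = (C : ENNReal) := by
    rcases le_or_gt 0 L with hL | hL
    · rw [hCdef, hL'def, max_eq_left hL]; rfl
    · have h1 : ENNReal.ofReal ((1 + ε) * L) = 0 := by
        rw [ENNReal.ofReal_eq_zero]
        exact mul_nonpos_of_nonneg_of_nonpos (by linarith) hL.le
      have h2 : ((1 + ε) * L') = 0 := by
        rw [hL'def, max_eq_right hL.le, mul_zero]
      rw [h1, hCdef, h2]; simp
  rw [hCoe]
  exact hfinal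

end
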